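/- Define a_ℓ = √(ℓ(ℓ-1)) for ℓ > 0 and a_ℓ = 0 otherwise. For ρ ∈ ℤ and s ∈ ℕ let N_{ρ,s}(n) be defined recursively by N_{ρ,0}(n) = a_{n+2ρ} and N_{ρ,s}(n) = N_{ρ,s-1}(n) - N_{ρ-1,s-1}(n). Then for all ρ ∈ ℤ, s ∈ ℕ there is a constant C_{ρ,s} such that |N_{ρ,s}(n)| ≤ C_{ρ,s} (2|n|+1)^{1-s} for all n ∈ ℤ. -/

import Mathlib

set_option maxHeartbeats 1000000
open Polynomial Real Set

noncomputable def Qp : ℕ → Polynomial ℝ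
  | 0 => 1
  | (s+1) => (Qp s).derivative * (X^2 - X) + C ((1:ℝ)/2 - s) * (C 2 * X - 1) * Qp s

noncomputable def Ff (s : ℕ) (x : ℝ) : ℝ := (Qp s).eval x * (x^2 - x) ^ ((1:ℝ)/2 - s)

lemma Ff_hasDerivAt (s : ℕ) {x : ℝ} (hx : 1 < x) : HasDerivAt (Ff s) (Ff (s+1) x) x := by
  have hu : (0:ℝ) < x^2 - x := by nlinarith
  have hq : HasDerivAt (fun y => (Qp s).eval y) ((Qp s).derivative.eval x) x :=
    Polynomial.hasDerivAt _ x
  have hinner : HasDerivAt (fun y : ℝ => y^2 - y) (2*x - 1) x := by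
    simpa using ((hasDerivAt_pow 2 x).fun_sub (hasDerivAt_id x))
  have hr : HasDerivAt (fun y : ℝ => (y^2 - y) ^ ((1:ℝ)/2 - s))
      ((2*x-1) * ((1:ℝ)/2 - s) * (x^2 - x) ^ ((1:ℝ)/2 - s - 1)) x :=
    hinner.rpow_const (Or.inl (ne_of_gt hu))
  have h : HasDerivAt (Ff s) _ x := hq.fun_mul hr
  convert h using 1
  show (Qp (s+1)).eval x * (x^2 - x) ^ ((1:ℝ)/2 - (s+1:ℕ)) = _
  have hsplit : (x^2 - x) ^ ((1:ℝ)/2 - s) =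
      (x^2 - x) ^ ((1:ℝ)/2 - s - 1) * (x^2 - x) := by
    rw [← Real.rpow_add_one (ne_of_gt hu)]; ring_nf
  have hexp : ((1:ℝ)/2 - (s+1:ℕ)) = (1:ℝ)/2 - s - 1 := by push_cast; ring
  rw [hexp]
  simp only [Qp, eval_add, eval_mul, eval_sub, eval_pow, eval_X, eval_C, eval_one]
  rw [hsplit]
  ring

lemma Qp_natDegree_le (s : ℕ) : (Qp s).natDegree ≤ s := by
  induction s with
  | zero => simp [Qp]
  | succ s ih =>
    have hXX : (X^2 - X : Polynomial ℝ).natDegree ≤ 2 := by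
      apply (natDegree_sub_le _ _).trans; simp
    have h2 : ((C 2 * X - 1 : Polynomial ℝ)).natDegree ≤ 1 := by
      apply (natDegree_sub_le _ _).trans; simp [natDegree_C_mul_le]
    have hterm2 : (C ((1:ℝ)/2 - s) * (C 2 * X - 1) * Qp s).natDegree ≤ s + 1 := by
      apply (natDegree_mul_le).trans
      have hA : (C ((1:ℝ)/2 - s) * (C 2 * X - 1)).natDegree ≤ 1 :=
        natDegree_mul_le.trans (by rw [natDegree_C]; simpa using h2)
      omega
    have hterm1 : ((Qp s).derivative * (X^2 - X)).natDegree ≤ s + 1 := by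
      rcases Nat.eq_zero_or_pos ((Qp s).natDegree) with h0 | hpos
      · obtain ⟨c, hc⟩ := natDegree_eq_zero.mp h0
        rw [← hc]
        simp
      · apply natDegree_mul_le.trans
        have := (Qp s).natDegree_derivative_le
        omega
    show ((Qp s).derivative * (X^2 - X) + C ((1:ℝ)/2 - s) * (C 2 * X - 1) * Qp s).natDegree ≤ s+1
    exact (natDegree_add_le _ _).trans (by omega)

lemma poly_eval_bound (P : Polynomial ℝ) :
    ∃ A : ℝ, 0 ≤ A ∧ ∀ x : ℝ, 1 ≤ x → |P.eval x| ≤ A * x ^ P.natDegree := by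
  refine ⟨∑ i ∈ Finset.range (P.natDegree + 1), |P.coeff i|,
    Finset.sum_nonneg fun i _ => abs_nonneg _, fun x hx => ?_⟩
  rw [Polynomial.eval_eq_sum_range, Finset.sum_mul]
  apply (Finset.abs_sum_le_sum_abs _ _).trans
  apply Finset.sum_le_sum
  intro i hi
  rw [abs_mul, abs_pow, abs_of_nonneg (by linarith : (0:ℝ) ≤ x)]
  exact mul_le_mul_of_nonneg_left
    (pow_le_pow_right₀ hx (by have := Finset.mem_range.mp hi; omega)) (abs_nonneg _)

lemma Ff_bound (s : ℕ) (hs : 1 ≤ s) :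
    ∃ B : ℝ, 0 ≤ B ∧ ∀ x : ℝ, 2 ≤ x → |Ff s x| ≤ B * x ^ ((1:ℝ) - s) := by
  obtain ⟨A, hA0, hA⟩ := poly_eval_bound (Qp s)
  refine ⟨A * 2 ^ (s:ℝ), by positivity, fun x hx => ?_⟩
  have hx0 : (0:ℝ) < x := by linarith
  have hu : (0:ℝ) < x^2 - x := by nlinarith
  have hhalf : (0:ℝ) < x^2/2 := by positivity
  have h1 : x^2/2 ≤ x^2 - x := by nlinarith
  have hneg : ((1:ℝ)/2 - s) ≤ 0 := by
    have : (1:ℝ) ≤ s := by exact_mod_cast hs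
    linarith
  have step1 : (x^2 - x) ^ ((1:ℝ)/2 - s) ≤ (x^2/2) ^ ((1:ℝ)/2 - s) :=
    Real.rpow_le_rpow_of_nonpos hhalf h1 hneg
  have step2 : (x^2/2) ^ ((1:ℝ)/2 - s) = (x^2) ^ ((1:ℝ)/2 - s) / 2 ^ ((1:ℝ)/2 - s) :=
    Real.div_rpow (by positivity) (by norm_num : (0:ℝ) ≤ 2) _
  have step3 : (x^2 : ℝ) ^ ((1:ℝ)/2 - s) = x ^ ((1:ℝ) - 2*s) := by
    rw [← Real.rpow_natCast x 2, ← Real.rpow_mul hx0.le]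
    norm_num; ring_nf
  have step4 : (1:ℝ) / 2 ^ ((1:ℝ)/2 - s) = 2 ^ ((s:ℝ) - 1/2) := by
    have h : ((s:ℝ) - 1/2) = -(1/2 - s) := by ring
    rw [h, Real.rpow_neg (by norm_num : (0:ℝ) ≤ 2), one_div]
  have step5 : (2:ℝ) ^ ((s:ℝ) - 1/2) ≤ 2 ^ (s:ℝ) :=
    Real.rpow_le_rpow_of_exponent_le (by norm_num) (by linarith)
  have hpoly : |(Qp s).eval x| ≤ A * x ^ (s:ℝ) := by
    refine (hA x (by linarith)).trans ?_
    rw [← Real.rpow_natCast x (Qp s).natDegree]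
    exact mul_le_mul_of_nonneg_left
      (Real.rpow_le_rpow_of_exponent_le (by linarith)
        (by exact_mod_cast Qp_natDegree_le s)) hA0
  have hrpos : (0:ℝ) ≤ (x^2 - x) ^ ((1:ℝ)/2 - s) := Real.rpow_nonneg hu.le _
  calc |Ff s x| = |(Qp s).eval x| * (x^2 - x) ^ ((1:ℝ)/2 - s) := by
        rw [Ff, abs_mul, abs_of_nonneg hrpos]
    _ ≤ (A * x ^ (s:ℝ)) * ((x^2/2) ^ ((1:ℝ)/2 - s)) := by
        apply mul_le_mul hpoly step1 hrpos (by positivity)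
    _ ≤ (A * x ^ (s:ℝ)) * (x ^ ((1:ℝ) - 2*s) * 2 ^ (s:ℝ)) := by
        apply mul_le_mul_of_nonneg_left _ (by positivity)
        rw [step2, step3, div_eq_mul_one_div, step4]
        exact mul_le_mul_of_nonneg_left step5 (Real.rpow_nonneg hx0.le _)
    _ = (A * 2 ^ (s:ℝ)) * (x ^ (s:ℝ) * x ^ ((1:ℝ) - 2*s)) := by ring
    _ = (A * 2 ^ (s:ℝ)) * x ^ ((1:ℝ) - s) := by
        rw [← Real.rpow_add hx0]; ring_nf

noncomputable def del (g : ℝ → ℝ) (x : ℝ) : ℝ := g x - g (x - 2)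

lemma del_iter_succ (g : ℝ → ℝ) (s : ℕ) (x : ℝ) :
    del^[s+1] g x = del^[s] g x - del^[s] g (x - 2) := by
  rw [Function.iterate_succ_apply']; rfl

lemma del_iter_hasDerivAt (j : ℕ) : ∀ (s : ℕ) (x : ℝ), 1 < x - 2*s →
    HasDerivAt (del^[s] (Ff j)) (del^[s] (Ff (j+1)) x) x := by
  intro s
  induction s generalizing j with
  | zero => intro x hx; simpa using Ff_hasDerivAt j (by simpa using hx)
  | succ s ih =>
    intro x hx
    have h1 : HasDerivAt (del^[s] (Ff j)) (del^[s] (Ff (j+1)) x) x := by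
      apply ih; push_cast at hx ⊢; linarith
    have h2 : HasDerivAt (del^[s] (Ff j)) (del^[s] (Ff (j+1)) (x-2)) (x-2) := by
      apply ih; push_cast at hx ⊢; linarith
    have h3 : HasDerivAt (fun y => del^[s] (Ff j) (y - 2)) (del^[s] (Ff (j+1)) (x-2)) x := by
      have := h2.comp x ((hasDerivAt_id x).sub_const 2)
      simpa [Function.comp_def] using this
    have h4 := h1.sub h3
    have e1 : del^[s+1] (Ff j) = fun y => del^[s] (Ff j) y - del^[s] (Ff j) (y - 2) := by
      funext y; exact del_iter_succ _ _ _
    rw [e1, del_iter_succ]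
    exact h4

lemma del_iter_mvt (s : ℕ) : ∀ (j : ℕ) (x : ℝ), 1 < x - 2*s →
    ∃ ξ ∈ Icc (x - 2*s) x, del^[s] (Ff j) x = 2^s * Ff (j+s) ξ := by
  induction s with
  | zero => intro j x hx; exact ⟨x, by simp, by simp⟩
  | succ s ih =>
    intro j x hx
    push_cast at hx
    have hlt : x - 2 < x := by linarith
    have hcont : ContinuousOn (del^[s] (Ff j)) (Icc (x-2) x) := by
      intro y hy
      have : 1 < y - 2*s := by rcases hy with ⟨h1, h2⟩; linarith
      exact ((del_iter_hasDerivAt j s y this).continuousAt).continuousWithinAt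
    have hderiv : ∀ y ∈ Ioo (x-2) x, HasDerivAt (del^[s] (Ff j)) (del^[s] (Ff (j+1)) y) y := by
      intro y hy
      apply del_iter_hasDerivAt
      rcases hy with ⟨h1, h2⟩; linarith
    obtain ⟨c, hc, hceq⟩ := exists_hasDerivAt_eq_slope _ _ hlt hcont hderiv
    have hc1 : 1 < c - 2*s := by rcases hc with ⟨h1, h2⟩; linarith
    obtain ⟨ξ, hξ, hξeq⟩ := ih (j+1) c hc1
    refine ⟨ξ, ⟨?_, ?_⟩, ?_⟩
    · rcases hξ with ⟨h1, _⟩; rcases hc with ⟨hcl, _⟩; push_cast at h1 ⊢; linarith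
    · rcases hξ with ⟨_, h2⟩; rcases hc with ⟨_, hcr⟩; linarith
    · rw [del_iter_succ]
      have hd : del^[s] (Ff j) x - del^[s] (Ff j) (x-2) = 2 * del^[s] (Ff (j+1)) c := by
        rw [hceq]; field_simp; ring
      rw [hd, hξeq]
      have hj : j + 1 + s = j + (s+1) := by omega
      rw [hj]; ring

noncomputable def Dd (a : ℤ → ℝ) : ℕ → ℤ → ℝ
  | 0, m => a m
  | (s+1), m => Dd a s m - Dd a s (m-2)

section disc
variable {a : ℤ → ℝ}
  (ha : ∀ ℓ : ℤ, a ℓ = if 0 < ℓ then Real.sqrt ((ℓ : ℝ) * ((ℓ : ℝ) - 1)) else 0)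
include ha

lemma a_abs_le (m : ℤ) : |a m| ≤ |(m:ℝ)| := by
  rw [ha m]
  split_ifs with h
  · have hm : (1:ℝ) ≤ (m:ℝ) := by exact_mod_cast h
    rw [abs_of_nonneg (Real.sqrt_nonneg _)]
    calc Real.sqrt ((m:ℝ) * ((m:ℝ) - 1)) ≤ Real.sqrt ((m:ℝ)^2) := by
          apply Real.sqrt_le_sqrt; nlinarith
      _ = |(m:ℝ)| := Real.sqrt_sq_eq_abs _
  · simp

lemma Dd_crude (s : ℕ) (m : ℤ) : |Dd a s m| ≤ 2^s * (|(m:ℝ)| + 2*s) := by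
  induction s generalizing m with
  | zero => simpa [Dd] using (a_abs_le ha m).trans (by linarith [abs_nonneg ((m:ℝ))])
  | succ s ih =>
    have h1 := ih m
    have h2 := ih (m-2)
    have habs : |(((m - 2 : ℤ)) : ℝ)| ≤ |(m:ℝ)| + 2 := by
      push_cast
      calc |(m:ℝ) - 2| ≤ |(m:ℝ)| + |(2:ℝ)| := abs_sub _ _
        _ = |(m:ℝ)| + 2 := by norm_num
    have key : |Dd a (s+1) m| ≤ |Dd a s m| + |Dd a s (m-2)| := by
      rw [show Dd a (s+1) m = Dd a s m - Dd a s (m-2) from rfl]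
      exact abs_sub _ _
    refine key.trans ?_
    push_cast
    have hp : (0:ℝ) < 2^s := by positivity
    have h2s : (2:ℝ)^(s+1) = 2*2^s := by ring
    nlinarith [abs_nonneg ((m:ℝ))]

lemma Dd_nonpos (s : ℕ) (m : ℤ) (hm : m ≤ 0) : Dd a s m = 0 := by
  induction s generalizing m with
  | zero =>
    have : ¬ (0 < m) := by omega
    simp [Dd, ha m, this]
  | succ s ih => simp [Dd, ih m hm, ih (m-2) (by omega)]

lemma a_eq_Ff (m : ℤ) (hm : (2:ℤ) ≤ m) : a m = Ff 0 (m:ℝ) := by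
  rw [ha m, if_pos (by omega), Ff]
  have h0 : (0:ℝ) ≤ (m:ℝ) * ((m:ℝ) - 1) := by
    have : (2:ℝ) ≤ (m:ℝ) := by exact_mod_cast hm
    nlinarith
  rw [Real.sqrt_eq_rpow]
  show _ = (Qp 0).eval _ * _
  simp only [Qp, eval_one]
  push_cast
  ring_nf

lemma Dd_eq_del (s : ℕ) : ∀ m : ℤ, (2:ℤ) ≤ m - 2*s → Dd a s m = del^[s] (Ff 0) (m:ℝ) := by
  induction s with
  | zero => intro m hm; simpa [Dd] using a_eq_Ff ha m (by omega)
  | succ s ih =>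
    intro m hm
    rw [del_iter_succ]
    have e1 : ((m:ℝ) - 2) = ((m - 2 : ℤ) : ℝ) := by push_cast; ring
    rw [show Dd a (s+1) m = Dd a s m - Dd a s (m-2) from rfl,
      ih m (by omega), e1, ih (m-2) (by omega)]

end disc

lemma rpow_neg_trans {u v c t : ℝ} (hu : 0 < u) (hv : 0 < v) (hc : 0 < c)
    (h : v ≤ c * u) (ht : t ≤ 0) : u ^ t ≤ c ^ (-t) * v ^ t := by
  have h1 : (c*u)^t ≤ v^t := Real.rpow_le_rpow_of_nonpos hv h ht
  rw [Real.mul_rpow hc.le hu.le] at h1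
  have h2 : c ^ (-t) * (c^t * u^t) ≤ c^(-t) * v^t :=
    mul_le_mul_of_nonneg_left h1 (Real.rpow_nonneg hc.le _)
  calc u ^ t = c ^ (-t) * (c^t * u^t) := by
        rw [← mul_assoc, ← Real.rpow_add hc]; simp
    _ ≤ c^(-t) * v^t := h2

theorem iterated_difference_coefficient_bound
    (a : ℤ → ℝ) (ha : ∀ ℓ : ℤ, a ℓ = if 0 < ℓ then Real.sqrt ((ℓ : ℝ) * ((ℓ : ℝ) - 1)) else 0)
    (N : ℤ → ℕ → ℤ → ℝ)
    (hN0 : ∀ ρ n : ℤ, N ρ 0 n = a (n + 2 * ρ))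
    (hNs : ∀ (ρ : ℤ) (s : ℕ) (n : ℤ), N ρ (s + 1) n = N ρ s n - N (ρ - 1) s n) :
    ∀ (ρ : ℤ) (s : ℕ), ∃ C : ℝ, ∀ n : ℤ,
      |N ρ s n| ≤ C * (2 * |(n : ℝ)| + 1) ^ (1 - (s : ℤ)) := by
  have hNd : ∀ (s : ℕ) (ρ n : ℤ), N ρ s n = Dd a s (n + 2*ρ) := by
    intro s
    induction s with
    | zero => intro ρ n; rw [hN0]; rfl
    | succ s ih =>
      intro ρ n
      rw [hNs, ih ρ n, ih (ρ-1) n,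
        show Dd a (s+1) (n+2*ρ) = Dd a s (n+2*ρ) - Dd a s (n+2*ρ-2) from rfl,
        show n + 2*(ρ-1) = n + 2*ρ - 2 by ring]
  intro ρ s
  rcases Nat.eq_zero_or_pos s with hs0 | hs1
  · -- s = 0
    subst hs0
    refine ⟨2*|(ρ:ℝ)| + 1, fun n => ?_⟩
    rw [hN0]
    have h1 : |a (n + 2*ρ)| ≤ |((n + 2*ρ : ℤ):ℝ)| := a_abs_le ha _
    have h2 : |((n + 2*ρ : ℤ):ℝ)| ≤ |(n:ℝ)| + 2*|(ρ:ℝ)| := by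
      push_cast
      calc |(n:ℝ) + 2*ρ| ≤ |(n:ℝ)| + |2*(ρ:ℝ)| := abs_add_le _ _
        _ = |(n:ℝ)| + 2*|(ρ:ℝ)| := by rw [abs_mul]; norm_num
    have h3 : (1 : ℤ) - ((0:ℕ):ℤ) = 1 := by norm_num
    rw [h3, zpow_one]
    nlinarith [abs_nonneg ((n:ℝ)), abs_nonneg ((ρ:ℝ))]
  · -- s ≥ 1
    set t : ℝ := 1 - (s:ℝ) with hts
    have hs1' : (1:ℝ) ≤ (s:ℝ) := by exact_mod_cast hs1
    have ht : t ≤ 0 := by rw [hts]; linarith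
    obtain ⟨B, hB0, hB⟩ := Ff_bound s hs1
    set c₁ : ℝ := 4*|(ρ:ℝ)| + 1 with hc₁
    have hc₁pos : 0 < c₁ := by positivity
    set R : ℝ := 4*s + 2 + 2*|(ρ:ℝ)| with hR
    have hRpos : (0:ℝ) < 2*R + 1 := by positivity
    set Cg : ℝ := 2^s * B * (6 ^ (-t) * (c₁ ^ (-t))) with hCg
    set Cb : ℝ := 2^s * (6*s + 2) * (2*R+1) ^ (-t) with hCb
    have hCg0 : 0 ≤ Cg := by positivity
    have hCb0 : 0 ≤ Cb := by positivity
    refine ⟨Cg + Cb, fun n => ?_⟩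
    set m : ℤ := n + 2*ρ with hm
    have hzr : (2 * |(n:ℝ)| + 1) ^ ((1:ℤ) - (s:ℕ)) = (2 * |(n:ℝ)| + 1) ^ t := by
      rw [← Real.rpow_intCast]
      congr 1
      push_cast
      rw [hts]
    set P : ℝ := (2 * |(n:ℝ)| + 1) ^ t with hP
    have hPpos : 0 < P := Real.rpow_pos_of_pos (by positivity) _
    have hnm : |(n:ℝ)| ≤ |(m:ℝ)| + 2*|(ρ:ℝ)| := by
      have : (n:ℝ) = (m:ℝ) - 2*(ρ:ℝ) := by rw [hm]; push_cast; ring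
      rw [this]
      calc |(m:ℝ) - 2*(ρ:ℝ)| ≤ |(m:ℝ)| + |2*(ρ:ℝ)| := abs_sub _ _
        _ = |(m:ℝ)| + 2*|(ρ:ℝ)| := by rw [abs_mul]; norm_num
    rw [hNd s ρ n, ← hm, hzr]
    rcases le_or_gt (4*(s:ℤ) + 2) m with hgood | hbad
    · -- good region
      set x : ℝ := (m:ℝ) with hx
      have hxge : 4*(s:ℝ) + 2 ≤ x := by
        rw [hx]; exact_mod_cast hgood
      have hbridge : Dd a s m = del^[s] (Ff 0) x := Dd_eq_del ha s m (by omega)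
      obtain ⟨ξ, hξmem, hξeq⟩ := del_iter_mvt s 0 x (by linarith)
      rcases hξmem with ⟨hξl, hξr⟩
      have hξ2 : (2:ℝ) ≤ ξ := by linarith
      have hxs : (0:ℝ) < x - 2*s := by linarith
      have hFb : |Ff s ξ| ≤ B * ξ ^ t := by
        have := hB ξ hξ2
        rwa [← hts] at this
      have hstep1 : ξ ^ t ≤ (x - 2*s) ^ t :=
        Real.rpow_le_rpow_of_nonpos hxs hξl ht
      have hstep2 : (x - 2*s) ^ t ≤ 6 ^ (-t) * (2*x+1) ^ t := by
        apply rpow_neg_trans hxs (by linarith) (by norm_num) _ ht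
        linarith
      have hstep3 : (2*x+1) ^ t ≤ c₁ ^ (-t) * P := by
        apply rpow_neg_trans (by linarith) (by positivity) hc₁pos _ ht
        have hx0 : (0:ℝ) ≤ x := by linarith
        have : |(m:ℝ)| = x := by rw [hx]; exact abs_of_nonneg hx0
        rw [hc₁]
        nlinarith [abs_nonneg ((n:ℝ)), abs_nonneg ((ρ:ℝ)), hnm]
      have hchain : |Dd a s m| ≤ Cg * P := by
        rw [hbridge, hξeq, show 0 + s = s from by omega]
        have h2p : (0:ℝ) < 2^s := by positivity
        calc |2^s * Ff s ξ| = 2^s * |Ff s ξ| := by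
              rw [abs_mul, abs_of_pos h2p]
          _ ≤ 2^s * (B * ξ ^ t) := by
              exact mul_le_mul_of_nonneg_left hFb h2p.le
          _ ≤ 2^s * (B * ((x - 2*s) ^ t)) := by
              apply mul_le_mul_of_nonneg_left _ h2p.le
              exact mul_le_mul_of_nonneg_left hstep1 hB0
          _ ≤ 2^s * (B * (6 ^ (-t) * (2*x+1) ^ t)) := by
              apply mul_le_mul_of_nonneg_left _ h2p.le
              exact mul_le_mul_of_nonneg_left hstep2 hB0
          _ ≤ 2^s * (B * (6 ^ (-t) * (c₁ ^ (-t) * P))) := by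
              apply mul_le_mul_of_nonneg_left _ h2p.le
              apply mul_le_mul_of_nonneg_left _ hB0
              exact mul_le_mul_of_nonneg_left hstep3 (by positivity)
          _ = Cg * P := by rw [hCg]; ring
      calc |Dd a s m| ≤ Cg * P := hchain
        _ ≤ (Cg + Cb) * P := by nlinarith
    · -- bad region
      rcases le_or_gt m 0 with hm0 | hm0
      · rw [Dd_nonpos ha s m hm0]
        simp only [abs_zero]
        positivity
      · have hm0' : (0:ℝ) < (m:ℝ) := by
          have h := (Int.cast_lt (R := ℝ)).mpr hm0
          simpa using h
        have hmabs : |(m:ℝ)| ≤ 4*(s:ℝ) + 2 := by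
          rw [abs_of_pos hm0']
          have h' : m ≤ 4*(s:ℤ) + 2 := by omega
          have h2 := (Int.cast_le (R := ℝ)).mpr h'
          push_cast at h2
          linarith
        have hcrude : |Dd a s m| ≤ 2^s * (6*s + 2) := by
          refine (Dd_crude ha s m).trans ?_
          have h2p : (0:ℝ) < 2^s := by positivity
          nlinarith
        have hnR : |(n:ℝ)| ≤ R := by rw [hR]; linarith
        have hPge : (2*R+1) ^ t ≤ P := by
          apply Real.rpow_le_rpow_of_nonpos (by positivity) (by linarith) ht
        have hone : (2*R+1) ^ (-t) * (2*R+1) ^ t = 1 := by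
          rw [← Real.rpow_add hRpos]; simp
        have : |Dd a s m| ≤ Cb * P := by
          calc |Dd a s m| ≤ 2^s * (6*s + 2) := hcrude
            _ = 2^s * (6*s + 2) * ((2*R+1) ^ (-t) * (2*R+1) ^ t) := by rw [hone, mul_one]
            _ ≤ 2^s * (6*s + 2) * ((2*R+1) ^ (-t) * P) := by
                apply mul_le_mul_of_nonneg_left _ (by positivity)
                exact mul_le_mul_of_nonneg_left hPge (by positivity)
            _ = Cb * P := by rw [hCb]; ring
        calc |Dd a s m| ≤ Cb * P := this
          _ ≤ (Cg + Cb) * P := by nlinarith
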